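/- For every strictly increasing sequence α with α_n > 1 and α_n → ∞, the spectrum of the Cesàro operator C on Λ₀(α) is contained in the closed disc {λ ∈ ℂ : |λ − 1/2| ≤ 1/2}; that is, for every λ ∈ ℂ with |λ − 1/2| > 1/2, the operator λI − C is bijective on Λ₀(α) with continuous inverse. -/

import Mathlib

open Filter Finset Topology

noncomputable section

/-- The weight `w_k(n) = e^{-alpha_n / k}`.  Indices are shifted by one: the natural
numbers `k n : Nat` represent the indices `k+1` and `n+1` (both running from `1`). -/
def wt (a : ℕ → ℝ) (k n : ℕ) : ℝ := Real.exp (-(a n) / ((k : ℝ) + 1))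

/-- Membership in the power series space of finite type `Λ₀(α)`:
`x ∈ Λ₀(α)` iff `w_k(n)|x_n| → 0` for every `k ≥ 1`. -/
def memLambda (a : ℕ → ℝ) (x : ℕ → ℂ) : Prop :=
  ∀ k : ℕ, Tendsto (fun n => wt a k n * ‖x n‖) atTop (𝓝 0)

/-- The norm `p_k(x) = sup_n w_k(n)|x_n|` generating the Fréchet topology of `Λ₀(α)`. -/
def pk (a : ℕ → ℝ) (k : ℕ) (x : ℕ → ℂ) : ℝ := ⨆ n : ℕ, wt a k n * ‖x n‖

/-- The discrete Cesàro operator `(C x)_n = (x_1 + ⋯ + x_n)/n` (0-indexed). -/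
def cesaro (x : ℕ → ℂ) : ℕ → ℂ := fun n => (∑ i ∈ Finset.range (n + 1), x i) / ((n : ℂ) + 1)

/-- `lam` belongs to the resolvent set of the Cesàro operator on `Λ₀(α)`:
`lam • I - C` has a linear inverse `T` on `Λ₀(α)` which is continuous for the
Fréchet topology generated by the norms `p_k`. -/
def InResolvent (a : ℕ → ℝ) (lam : ℂ) : Prop :=
  ∃ T : (ℕ → ℂ) → (ℕ → ℂ),
    (∀ x, memLambda a x → memLambda a (T x)) ∧
    (∀ x y, memLambda a x → memLambda a y → T (x + y) = T x + T y) ∧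
    (∀ (c : ℂ) (x), memLambda a x → T (c • x) = c • T x) ∧
    (∀ k : ℕ, ∃ l : ℕ, ∃ M : ℝ, 0 < M ∧ ∀ x, memLambda a x → pk a k (T x) ≤ M * pk a l x) ∧
    (∀ x, memLambda a x → T (lam • x - cesaro x) = x) ∧
    (∀ x, memLambda a x → lam • T x - cesaro (T x) = x)

namespace Stmt15Aux

def bb (lam : ℂ) (n : ℕ) : ℂ := lam - 1 / ((n : ℂ) + 1)

def Sp (lam : ℂ) (y : ℕ → ℂ) : ℕ → ℂ
  | 0 => 0
  | n + 1 => (lam * Sp lam y n + y n) / bb lam n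

def Tres (lam : ℂ) (y : ℕ → ℂ) (n : ℕ) : ℂ := Sp lam y (n + 1) - Sp lam y n

lemma bb_cast (lam : ℂ) (n : ℕ) :
    bb lam n = lam - ((1 / ((n : ℝ) + 1) : ℝ) : ℂ) := by
  unfold bb; push_cast; ring

lemma abs_t_half (n : ℕ) : ‖(1 : ℂ) / ((n : ℂ) + 1) - 1 / 2‖ ≤ 1 / 2 := by
  have h : ((1 : ℂ) / ((n : ℂ) + 1) - 1 / 2) = (((1 / ((n : ℝ) + 1) - 1 / 2 : ℝ)) : ℂ) := by
    push_cast; ring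
  rw [h, Complex.norm_real, Real.norm_eq_abs, abs_le]
  have h0 : (0 : ℝ) < (n : ℝ) + 1 := by positivity
  have h1 : (1 : ℝ) / ((n : ℝ) + 1) ≤ 1 := by
    rw [div_le_one h0]; linarith [Nat.cast_nonneg (α := ℝ) n]
  have h2 : (0 : ℝ) ≤ 1 / ((n : ℝ) + 1) := by positivity
  constructor <;> linarith

lemma delta_le {lam : ℂ} (n : ℕ) :
    ‖lam - 1 / 2‖ - 1 / 2 ≤ ‖bb lam n‖ := by
  have h := abs_t_half n
  have tri : ‖lam - 1 / 2‖ ≤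
      ‖bb lam n‖ + ‖(1 : ℂ) / ((n : ℂ) + 1) - 1 / 2‖ := by
    have e : lam - 1 / 2 = bb lam n + ((1 : ℂ) / ((n : ℂ) + 1) - 1 / 2) := by unfold bb; ring
    rw [e]; exact norm_add_le _ _
  linarith

lemma abs_le_of_normSq_le {z w : ℂ} {r : ℝ} (hr : 0 ≤ r)
    (h : Complex.normSq z ≤ r ^ 2 * Complex.normSq w) :
    ‖z‖ ≤ r * ‖w‖ := by
  have h2 : r * ‖w‖ = Real.sqrt (r ^ 2 * Complex.normSq w) := by
    rw [Complex.norm_def, Real.sqrt_mul (sq_nonneg r), Real.sqrt_sq hr]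
  rw [Complex.norm_def, h2]
  exact Real.sqrt_le_sqrt h


lemma Sp_add (lam : ℂ) (x y : ℕ → ℂ) : ∀ n, Sp lam (x + y) n = Sp lam x n + Sp lam y n
  | 0 => by simp [Sp]
  | n + 1 => by
    simp only [Sp, Sp_add lam x y n, Pi.add_apply]
    rw [← add_div]; ring_nf

lemma Sp_smul (lam c : ℂ) (x : ℕ → ℂ) : ∀ n, Sp lam (c • x) n = c * Sp lam x n
  | 0 => by simp [Sp]
  | n + 1 => by
    simp only [Sp, Sp_smul lam c x n, Pi.smul_apply, smul_eq_mul]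
    rw [← mul_div_assoc]; ring_nf

lemma Tres_add (lam : ℂ) (x y : ℕ → ℂ) : Tres lam (x + y) = Tres lam x + Tres lam y := by
  funext n; simp [Tres, Sp_add]; ring

lemma Tres_smul (lam c : ℂ) (x : ℕ → ℂ) : Tres lam (c • x) = c • Tres lam x := by
  funext n; simp [Tres, Sp_smul]; ring

lemma Sp_resolvent (lam : ℂ) (hb : ∀ n, bb lam n ≠ 0) (x : ℕ → ℂ) :
    ∀ n, Sp lam (lam • x - cesaro x) n = ∑ i ∈ Finset.range n, x i
  | 0 => by simp [Sp]
  | n + 1 => by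
    have IH := Sp_resolvent lam hb x n
    have hn : ((n : ℂ) + 1) ≠ 0 := Nat.cast_add_one_ne_zero n
    simp only [Sp, IH, Pi.sub_apply, Pi.smul_apply, smul_eq_mul, cesaro]
    rw [div_eq_iff (hb n)]
    unfold bb
    rw [Finset.sum_range_succ]
    field_simp
    ring

lemma Tres_left_inv (lam : ℂ) (hb : ∀ n, bb lam n ≠ 0) (x : ℕ → ℂ) :
    Tres lam (lam • x - cesaro x) = x := by
  funext n
  simp [Tres, Sp_resolvent lam hb, Finset.sum_range_succ]

lemma sum_Tres (lam : ℂ) (y : ℕ → ℂ) (n : ℕ) :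
    ∑ i ∈ Finset.range (n + 1), Tres lam y i = Sp lam y (n + 1) := by
  have h := Finset.sum_range_sub (fun m => Sp lam y m) (n + 1)
  simpa [Tres, Sp] using h

lemma Tres_right_inv (lam : ℂ) (hb : ∀ n, bb lam n ≠ 0) (y : ℕ → ℂ) :
    lam • Tres lam y - cesaro (Tres lam y) = y := by
  funext n
  have key : Sp lam y (n + 1) * bb lam n = lam * Sp lam y n + y n := by
    show (lam * Sp lam y n + y n) / bb lam n * bb lam n = _
    exact div_mul_cancel₀ _ (hb n)
  simp only [Pi.sub_apply, Pi.smul_apply, smul_eq_mul, cesaro]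
  rw [sum_Tres]
  simp only [Tres]
  unfold bb at key
  linear_combination key

lemma Tres_formula (lam : ℂ) (hb : ∀ n, bb lam n ≠ 0) (y : ℕ → ℂ) (n : ℕ) :
    Tres lam y n = (Sp lam y n / ((n : ℂ) + 1) + y n) / bb lam n := by
  have key : Sp lam y (n + 1) * bb lam n = lam * Sp lam y n + y n := by
    show (lam * Sp lam y n + y n) / bb lam n * bb lam n = _
    exact div_mul_cancel₀ _ (hb n)
  show Sp lam y (n + 1) - Sp lam y n = _
  rw [eq_div_iff (hb n)]
  unfold bb at key ⊢
  linear_combination key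


set_option maxHeartbeats 2000000 in
lemma key_est (a : ℕ → ℝ) (hmono : StrictMono a) (lam : ℂ)
    (hlam : 1 / 2 < ‖lam - 1 / 2‖) :
    ∃ C : ℝ, 0 < C ∧ ∀ (l : ℕ) (B : ℝ) (y : ℕ → ℂ), 0 ≤ B →
      (∀ m, ‖y m‖ ≤ B * Real.exp (a m / ((l : ℝ) + 1))) →
      ∀ n, ‖Tres lam y n‖ ≤ C * B * Real.exp (a n / ((l : ℝ) + 1)) := by
  set δ : ℝ := ‖lam - 1 / 2‖ - 1 / 2 with hδdef
  have hδ : 0 < δ := by simp only [hδdef]; linarith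
  have hδb : ∀ n, δ ≤ ‖bb lam n‖ := fun n => delta_le n
  have hbne : ∀ n, bb lam n ≠ 0 := by
    intro n h
    have := hδb n
    rw [h] at this; simp at this; linarith
  have hlam0 : lam ≠ 0 := by
    intro h
    rw [h] at hlam
    have : ‖(0 - 1 / 2 : ℂ)‖ = 1 / 2 := by
      rw [zero_sub, norm_neg]
      rw [show ((1:ℂ)/2) = (((1:ℝ)/2 : ℝ) : ℂ) by push_cast; ring, Complex.norm_real]
      norm_num
    rw [this] at hlam; linarith
  set S : ℝ := Complex.normSq lam with hSdef'
  have hS : 0 < S := Complex.normSq_pos.mpr hlam0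
  have hSdef : lam.re ^ 2 + lam.im ^ 2 = S := by
    rw [hSdef', Complex.normSq_apply]; ring
  have hreS : lam.re < S := by
    have h2 : (1 / 2 : ℝ) * (1 / 2) < ‖lam - 1 / 2‖ * ‖lam - 1 / 2‖ :=
      mul_self_lt_mul_self (by norm_num) hlam
    rw [← sq, ← sq, ← Complex.normSq_eq_norm_sq] at h2
    have e : Complex.normSq (lam - 1 / 2) = (lam.re - 1 / 2) ^ 2 + lam.im ^ 2 := by
      rw [Complex.normSq_apply]
      simp [Complex.sub_re, Complex.sub_im]
      ring
    rw [e] at h2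
    nlinarith [hSdef]
  set b : ℝ := lam.re / S with hbdef
  have hre : lam.re = b * S := by rw [hbdef]; field_simp
  have hb1 : b < 1 := (div_lt_one hS).mpr hreS
  set c : ℝ := (1 + max b 0) / 2 with hcdef
  have hmax1 : max b 0 < 1 := by
    rcases max_cases b 0 with ⟨h, _⟩ | ⟨h, _⟩ <;> rw [h] <;> linarith
  have hc0 : 0 < c := by
    have : (0:ℝ) ≤ max b 0 := le_max_right _ _
    rw [hcdef]; linarith
  have hcb : b < c := by
    have : b ≤ max b 0 := le_max_left _ _
    rw [hcdef]; linarith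
  have hc1 : c < 1 := by rw [hcdef]; linarith
  set t0 : ℝ := (c - b) / (2 * c * (b ^ 2 + 1)) with ht0def
  have ht0 : 0 < t0 := by
    apply div_pos (by linarith)
    positivity
  -- the q-bound
  have qlem : ∀ t : ℝ, 0 < t → t ≤ t0 → ‖lam‖ ≤ (1 + c * t) * ‖lam - (t : ℂ)‖ := by
    intro t ht htle
    have hct : 0 ≤ 1 + c * t := by positivity
    apply abs_le_of_normSq_le hct
    have hns : Complex.normSq (lam - (t : ℂ)) = (lam.re - t) ^ 2 + lam.im ^ 2 := by
      rw [Complex.normSq_apply]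
      simp [Complex.sub_re, Complex.sub_im]
      ring
    rw [hns, ← hSdef']
    have htt : t * (2 * c * (b ^ 2 + 1)) ≤ c - b := by
      rw [ht0def] at htle
      rw [← le_div_iff₀ (by positivity)]
      exact htle
    have h1 : 4 * b * c * t ≤ 2 * (c - b) := by
      rcases le_or_gt b 0 with hb0 | hb0
      · nlinarith [mul_nonneg (neg_nonneg.mpr hb0) (mul_nonneg hc0.le ht.le)]
      · have hA2' := mul_le_mul_of_nonneg_left htt (by linarith : (0:ℝ) ≤ 2 * b)
        nlinarith [hA2', mul_pos (sub_pos.mpr hb1) (sub_pos.mpr hcb),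
          mul_nonneg (mul_nonneg (mul_nonneg hb0.le hb0.le) (mul_nonneg hb0.le hc0.le)) ht.le]
    have h2 : 2 * b * t ≤ 1 := by
      rcases le_or_gt b 0 with hb0 | hb0
      · nlinarith [mul_nonneg (neg_nonneg.mpr hb0) ht.le]
      · have hA1 : b * (c - b) ≤ c * (b ^ 2 + 1) := by nlinarith [sq_nonneg (2 * b - 1), hc0.le, sq_nonneg b]
        have hA2 : b * (t * (2 * c * (b ^ 2 + 1))) ≤ b * (c - b) :=
          mul_le_mul_of_nonneg_left htt hb0.le
        have hD : 0 < c * (b ^ 2 + 1) := by positivity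
        nlinarith [hA1, hA2, hD]
    have hu : 0 ≤ 1 - 2 * b * t := by linarith
    have e3 : (lam.re - t) ^ 2 + lam.im ^ 2 = S * (1 - 2 * b * t) + t ^ 2 := by
      linear_combination hSdef - 2 * t * hre
    rw [e3]
    have step1 : S ≤ S * (1 - 2 * b * t) * (1 + 2 * c * t) := by
      nlinarith [mul_nonneg (mul_nonneg hS.le ht.le) (sub_nonneg.mpr h1)]
    have step2 : S * (1 - 2 * b * t) * (1 + 2 * c * t) ≤ (1 + c * t) ^ 2 * (S * (1 - 2 * b * t) + t ^ 2) := by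
      nlinarith [mul_nonneg hS.le hu, sq_nonneg (c * t), sq_nonneg t, mul_nonneg (mul_nonneg hS.le hu) (sq_nonneg (c*t)), mul_nonneg (sq_nonneg t) (mul_nonneg hc0.le ht.le), mul_nonneg (sq_nonneg t) (sq_nonneg (c*t))]
    linarith
  -- index threshold
  set N : ℕ := ⌈1 / t0⌉₊ with hNdef
  have hNle : ∀ n : ℕ, N ≤ n → 1 / ((n : ℝ) + 1) ≤ t0 := by
    intro n hn
    have h1t : 1 / t0 ≤ (n : ℝ) + 1 := by
      have h := Nat.le_ceil (1 / t0)
      have hn' : (N : ℝ) ≤ (n : ℝ) := Nat.cast_le.mpr hn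
      rw [← hNdef] at h
      linarith
    rw [div_le_iff₀ (by positivity : (0:ℝ) < (n : ℝ) + 1)]
    rw [div_le_iff₀ ht0] at h1t
    nlinarith
  have qb : ∀ n : ℕ, N ≤ n →
      ‖lam‖ ≤ (1 + c * (1 / ((n : ℝ) + 1))) * ‖bb lam n‖ := by
    intro n hn
    rw [bb_cast]
    exact qlem _ (by positivity) (hNle n hn)
  -- step bound
  have stepb : ∀ (y : ℕ → ℂ) (n : ℕ), ‖Sp lam y (n + 1)‖ ≤
      (‖lam‖ * ‖Sp lam y n‖ + ‖y n‖) / δ := by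
    intro y n
    have e : ‖Sp lam y (n + 1)‖ =
        ‖lam * Sp lam y n + y n‖ / ‖bb lam n‖ := by
      show ‖(lam * Sp lam y n + y n) / bb lam n‖ = _
      rw [norm_div]
    rw [e]
    apply div_le_div₀ (by positivity) _ hδ (hδb n)
    calc ‖lam * Sp lam y n + y n‖
        ≤ ‖lam * Sp lam y n‖ + ‖y n‖ := norm_add_le _ _
      _ = ‖lam‖ * ‖Sp lam y n‖ + ‖y n‖ := by rw [norm_mul]
  set A : ℝ := ‖lam‖ with hAdef
  have hA0 : 0 ≤ A := norm_nonneg _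
  set G : ℝ := (A + 1) / δ + 1 with hGdef
  have hG1 : 1 ≤ G := by
    have : 0 ≤ (A + 1) / δ := by positivity
    rw [hGdef]; linarith
  have hGd : A + 1 ≤ δ * G := by
    rw [hGdef]
    field_simp
    nlinarith
  set M : ℝ := max (G ^ N) (1 / ((1 - c) * δ)) with hMdef
  have hGN1 : 1 ≤ G ^ N := one_le_pow₀ hG1
  have hM1 : 1 ≤ M := le_trans hGN1 (le_max_left _ _)
  have hM0 : 0 < M := by linarith
  have h1c : 0 < 1 - c := by linarith
  have hMth : 1 / δ ≤ M * (1 - c) := by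
    have h := le_max_right (G ^ N) (1 / ((1 - c) * δ))
    rw [← hMdef] at h
    calc 1 / δ = (1 / ((1 - c) * δ)) * (1 - c) := by field_simp
      _ ≤ M * (1 - c) := mul_le_mul_of_nonneg_right h h1c.le
  refine ⟨(M + 1) / δ, by positivity, ?_⟩
  intro l B y hB hy
  set E : ℕ → ℝ := fun n => Real.exp (a n / ((l : ℝ) + 1)) with hEdef
  have hEpos : ∀ n, 0 < E n := fun n => Real.exp_pos _
  have hEmono : ∀ n, E n ≤ E (n + 1) := by
    intro n
    apply Real.exp_le_exp.mpr
    gcongr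
    exact (hmono (Nat.lt_succ_self n)).le
  have hy' : ∀ m, ‖y m‖ ≤ B * E m := hy
  have crude : ∀ n, ‖Sp lam y n‖ ≤ B * G ^ n * E n := by
    intro n
    induction n with
    | zero =>
      show ‖0‖ ≤ _
      rw [norm_zero]
      exact mul_nonneg (mul_nonneg hB (by norm_num)) (hEpos 0).le
    | succ n IH =>
      have hGn : 1 ≤ G ^ n := one_le_pow₀ hG1
      have hGn0 : (0:ℝ) ≤ G ^ n := by linarith
      calc ‖Sp lam y (n + 1)‖
          ≤ (A * ‖Sp lam y n‖ + ‖y n‖) / δ := stepb y n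
        _ ≤ (A * (B * G ^ n * E n) + B * E n) / δ := by
            apply div_le_div₀ _ _ hδ le_rfl
            · exact add_nonneg (mul_nonneg hA0 (mul_nonneg (mul_nonneg hB hGn0) (hEpos n).le))
                (mul_nonneg hB (hEpos n).le)
            · have h := mul_le_mul_of_nonneg_left IH hA0
              linarith [hy' n]
        _ ≤ B * G ^ (n + 1) * E (n + 1) := by
            rw [div_le_iff₀ hδ, pow_succ]
            have k1 : B * G ^ n * E (n + 1) * (A + 1) ≤ B * G ^ n * E (n + 1) * (δ * G) :=
              mul_le_mul_of_nonneg_left hGd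
                (mul_nonneg (mul_nonneg hB hGn0) (hEpos (n + 1)).le)
            have k2 : B * G ^ n * E n * (A + 1) ≤ B * G ^ n * E (n + 1) * (A + 1) :=
              mul_le_mul_of_nonneg_right
                (mul_le_mul_of_nonneg_left (hEmono n) (mul_nonneg hB hGn0))
                (by linarith)
            have k3 : B * E n ≤ B * G ^ n * E n := by
              have := mul_le_mul_of_nonneg_right
                (mul_le_mul_of_nonneg_left hGn hB) (hEpos n).le
              calc B * E n = B * 1 * E n := by ring
                _ ≤ B * G ^ n * E n := this
            nlinarith [k1, k2, k3]
  have inv : ∀ n, ‖Sp lam y n‖ ≤ M * B * ((n : ℝ) + 1) * E n := by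
    intro n
    induction n with
    | zero =>
      show ‖0‖ ≤ _
      rw [norm_zero]
      exact mul_nonneg (mul_nonneg (mul_nonneg hM0.le hB) (by norm_num)) (hEpos 0).le
    | succ n IH =>
      rcases lt_or_ge n N with hn | hn
      · have h1 : ‖Sp lam y (n + 1)‖ ≤ B * G ^ (n + 1) * E (n + 1) := crude (n + 1)
        have hGM : G ^ (n + 1) ≤ M :=
          le_trans (pow_le_pow_right₀ hG1 (by omega)) (le_max_left _ _)
        refine le_trans h1 ?_
        push_cast
        have w1 : (0:ℝ) ≤ B * E (n + 1) := mul_nonneg hB (hEpos (n + 1)).le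
        nlinarith [mul_le_mul_of_nonneg_left hGM w1,
          mul_nonneg (mul_nonneg hM0.le w1) (Nat.cast_nonneg (α := ℝ) n)]
      · have hq := qb n hn
        have hbbpos : 0 < ‖bb lam n‖ := lt_of_lt_of_le hδ (hδb n)
        have hX : (0:ℝ) ≤ ‖Sp lam y n‖ := norm_nonneg _
        set t : ℝ := 1 / ((n : ℝ) + 1) with htdef
        have e : ‖Sp lam y (n + 1)‖ =
            ‖lam * Sp lam y n + y n‖ / ‖bb lam n‖ := by
          show ‖(lam * Sp lam y n + y n) / bb lam n‖ = _
          rw [norm_div]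
        have split : ‖Sp lam y (n + 1)‖ ≤
            A * ‖Sp lam y n‖ / ‖bb lam n‖ + ‖y n‖ / δ := by
          rw [e]
          calc ‖lam * Sp lam y n + y n‖ / ‖bb lam n‖
              ≤ (A * ‖Sp lam y n‖ + ‖y n‖) / ‖bb lam n‖ := by
                apply div_le_div₀ _ _ hbbpos le_rfl
                · exact add_nonneg (mul_nonneg hA0 hX) (norm_nonneg _)
                · calc ‖lam * Sp lam y n + y n‖
                      ≤ ‖lam * Sp lam y n‖ + ‖y n‖ := norm_add_le _ _
                    _ = A * ‖Sp lam y n‖ + ‖y n‖ := by rw [norm_mul]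
            _ = A * ‖Sp lam y n‖ / ‖bb lam n‖
                + ‖y n‖ / ‖bb lam n‖ := add_div _ _ _
            _ ≤ _ := by
                have : ‖y n‖ / ‖bb lam n‖ ≤ ‖y n‖ / δ :=
                  div_le_div_of_nonneg_left (norm_nonneg _) hδ (hδb n)
                linarith
        have term1 : A * ‖Sp lam y n‖ / ‖bb lam n‖ ≤
            (1 + c * t) * ‖Sp lam y n‖ := by
          rw [div_le_iff₀ hbbpos]
          calc A * ‖Sp lam y n‖
              ≤ ((1 + c * t) * ‖bb lam n‖) * ‖Sp lam y n‖ :=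
                mul_le_mul_of_nonneg_right hq hX
            _ = (1 + c * t) * ‖Sp lam y n‖ * ‖bb lam n‖ := by ring
        have hct0 : (0:ℝ) ≤ 1 + c * t := by positivity
        have term2 : (1 + c * t) * ‖Sp lam y n‖ ≤
            (1 + c * t) * (M * B * ((n : ℝ) + 1) * E n) := mul_le_mul_of_nonneg_left IH hct0
        have term3 : ‖y n‖ / δ ≤ (B * E n) / δ :=
          div_le_div₀ (mul_nonneg hB (hEpos n).le) (hy' n) hδ le_rfl
        have e1 : (1 + c * t) * ((n : ℝ) + 1) = (n : ℝ) + 1 + c := by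
          rw [htdef]; field_simp
        have e2 : (1 + c * t) * (M * B * ((n : ℝ) + 1) * E n)
            = M * ((n : ℝ) + 1 + c) * (B * E n) := by
          linear_combination (M * (B * E n)) * e1
        have w1 : (0:ℝ) ≤ B * E n := mul_nonneg hB (hEpos n).le
        have w2 : B * E n ≤ B * E (n + 1) := mul_le_mul_of_nonneg_left (hEmono n) hB
        have h2 : (B * E n) / δ ≤ M * (1 - c) * (B * E (n + 1)) := by
          calc (B * E n) / δ = (B * E n) * (1 / δ) := by ring
            _ ≤ (B * E (n + 1)) * (M * (1 - c)) := by
                apply mul_le_mul w2 hMth (by positivity) (by positivity)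
            _ = M * (1 - c) * (B * E (n + 1)) := by ring
        have h3 : M * ((n : ℝ) + 1 + c) * (B * E n) ≤ M * ((n : ℝ) + 1 + c) * (B * E (n + 1)) := by
          apply mul_le_mul_of_nonneg_left w2
          have : (0:ℝ) ≤ (n : ℝ) + 1 + c := by positivity
          exact mul_nonneg hM0.le this
        push_cast
        have efin : M * B * ((n : ℝ) + 1 + 1) * E (n + 1)
            = M * ((n : ℝ) + 1 + c) * (B * E (n + 1)) + M * (1 - c) * (B * E (n + 1)) := by
          ring
        calc ‖Sp lam y (n + 1)‖
            ≤ A * ‖Sp lam y n‖ / ‖bb lam n‖ + ‖y n‖ / δ := split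
          _ ≤ (1 + c * t) * (M * B * ((n : ℝ) + 1) * E n) + (B * E n) / δ := by
              linarith [le_trans term1 term2, term3]
          _ = M * ((n : ℝ) + 1 + c) * (B * E n) + (B * E n) / δ := by rw [e2]
          _ ≤ M * ((n : ℝ) + 1 + c) * (B * E (n + 1)) + M * (1 - c) * (B * E (n + 1)) := by
              linarith [h2, h3]
          _ = M * B * ((n : ℝ) + 1 + 1) * E (n + 1) := efin.symm
  -- final bound
  intro n
  have habs : ‖(n : ℂ) + 1‖ = (n : ℝ) + 1 := by
    rw [show ((n : ℂ) + 1) = (((n + 1 : ℕ)) : ℂ) by push_cast; ring, Complex.norm_natCast]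
    push_cast; ring
  have e : ‖Tres lam y n‖ =
      ‖Sp lam y n / ((n : ℂ) + 1) + y n‖ / ‖bb lam n‖ := by
    rw [Tres_formula lam hbne y n, norm_div]
  rw [e]
  have tri : ‖Sp lam y n / ((n : ℂ) + 1) + y n‖ ≤
      ‖Sp lam y n‖ / ((n : ℝ) + 1) + ‖y n‖ := by
    calc ‖Sp lam y n / ((n : ℂ) + 1) + y n‖
        ≤ ‖Sp lam y n / ((n : ℂ) + 1)‖ + ‖y n‖ := norm_add_le _ _
      _ = ‖Sp lam y n‖ / ((n : ℝ) + 1) + ‖y n‖ := by rw [norm_div, habs]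
  have hSn : ‖Sp lam y n‖ / ((n : ℝ) + 1) ≤ M * B * E n := by
    rw [div_le_iff₀ (by positivity : (0:ℝ) < (n : ℝ) + 1)]
    calc ‖Sp lam y n‖ ≤ M * B * ((n : ℝ) + 1) * E n := inv n
      _ = M * B * E n * ((n : ℝ) + 1) := by ring
  calc ‖Sp lam y n / ((n : ℂ) + 1) + y n‖ / ‖bb lam n‖
      ≤ (M * B * E n + B * E n) / δ := by
        apply div_le_div₀ _ _ hδ (hδb n)
        · exact add_nonneg (mul_nonneg (mul_nonneg hM0.le hB) (hEpos n).le)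
            (mul_nonneg hB (hEpos n).le)
        · linarith [tri, hSn, hy' n]
    _ = (M + 1) / δ * B * E n := by ring


lemma wt_pos (a : ℕ → ℝ) (k n : ℕ) : 0 < wt a k n := Real.exp_pos _

lemma wt_mul_exp (a : ℕ → ℝ) (k n : ℕ) :
    wt a k n * Real.exp (a n / ((k : ℝ) + 1)) = 1 := by
  show Real.exp _ * _ = 1
  rw [← Real.exp_add, show -(a n) / ((k : ℝ) + 1) + a n / ((k : ℝ) + 1) = 0 by ring,
    Real.exp_zero]

lemma pk_nonneg (a : ℕ → ℝ) (l : ℕ) (y : ℕ → ℂ) : 0 ≤ pk a l y :=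
  Real.iSup_nonneg fun n => mul_nonneg (wt_pos a l n).le (norm_nonneg _)

lemma pk_bound (a : ℕ → ℝ) (l : ℕ) (y : ℕ → ℂ)
    (h : Tendsto (fun n => wt a l n * ‖y n‖) atTop (𝓝 0)) (m : ℕ) :
    ‖y m‖ ≤ pk a l y * Real.exp (a m / ((l : ℝ) + 1)) := by
  have hbdd : BddAbove (Set.range fun n => wt a l n * ‖y n‖) := h.bddAbove_range
  have hle : wt a l m * ‖y m‖ ≤ pk a l y := le_ciSup hbdd m
  calc ‖y m‖
      = (wt a l m * ‖y m‖) * Real.exp (a m / ((l : ℝ) + 1)) := by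
        rw [show (wt a l m * ‖y m‖) * Real.exp (a m / ((l : ℝ) + 1))
            = (wt a l m * Real.exp (a m / ((l : ℝ) + 1))) * ‖y m‖ by ring,
          wt_mul_exp, one_mul]
    _ ≤ pk a l y * Real.exp (a m / ((l : ℝ) + 1)) :=
        mul_le_mul_of_nonneg_right hle (Real.exp_pos _).le


end Stmt15Aux

open Stmt15Aux in
/-- for every `α`, the spectrum of `C` on `Λ₀(α)` is contained in the
closed disc `{λ : |λ - 1/2| ≤ 1/2}`: every `λ` with `|λ - 1/2| > 1/2` belongs to the
resolvent set. -/
theorem stmt15 (a : ℕ → ℝ) (hmono : StrictMono a) (h1 : ∀ n, 1 < a n)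
    (htop : Tendsto a atTop atTop) :
    ∀ lam : ℂ, 1 / 2 < ‖lam - 1 / 2‖ → InResolvent a lam := by
  intro lam hlam
  have hbne : ∀ n, bb lam n ≠ 0 := by
    intro n h
    have hd := delta_le (lam := lam) n
    rw [h] at hd; simp at hd; linarith
  obtain ⟨C, hC, hest⟩ := key_est a hmono lam hlam
  refine ⟨Tres lam, ?_, fun x y _ _ => Tres_add lam x y, fun c x _ => Tres_smul lam c x,
    ?_, fun x _ => Tres_left_inv lam hbne x, fun y _ => Tres_right_inv lam hbne y⟩
  · -- memLambda preservation
    intro y hy k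
    set B : ℝ := pk a (k + 1) y with hBdef
    have hB0 : 0 ≤ B := pk_nonneg a (k + 1) y
    have hyB : ∀ m, ‖y m‖ ≤ B * Real.exp (a m / (((k + 1 : ℕ) : ℝ) + 1)) :=
      pk_bound a (k + 1) y (hy (k + 1))
    have hest' := hest (k + 1) B y hB0 hyB
    set d : ℝ := 1 / (((k : ℝ) + 1) * ((k : ℝ) + 2)) with hddef
    have hd0 : 0 < d := by positivity
    have hgle : ∀ n, wt a k n * ‖Tres lam y n‖ ≤ C * B * Real.exp (a n * (-d)) := by
      intro n
      have harg : -(a n) / ((k : ℝ) + 1) + a n / (((k + 1 : ℕ) : ℝ) + 1) = a n * (-d) := by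
        rw [hddef]; push_cast; field_simp; ring
      calc wt a k n * ‖Tres lam y n‖
          ≤ wt a k n * (C * B * Real.exp (a n / (((k + 1 : ℕ) : ℝ) + 1))) :=
            mul_le_mul_of_nonneg_left (hest' n) (wt_pos a k n).le
        _ = C * B * Real.exp (a n * (-d)) := by
            rw [show wt a k n * (C * B * Real.exp (a n / (((k + 1 : ℕ) : ℝ) + 1)))
                = C * B * (Real.exp (-(a n) / ((k : ℝ) + 1)) *
                  Real.exp (a n / (((k + 1 : ℕ) : ℝ) + 1))) from by rw [wt]; ring,
              ← Real.exp_add, harg]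
    have htend : Tendsto (fun n => C * B * Real.exp (a n * (-d))) atTop (𝓝 0) := by
      have h1' : Tendsto (fun n => a n * (-d)) atTop atBot :=
        htop.atTop_mul_const_of_neg (by linarith)
      have h2' : Tendsto (fun n => Real.exp (a n * (-d))) atTop (𝓝 0) :=
        Real.tendsto_exp_atBot.comp h1'
      have := h2'.const_mul (C * B)
      simpa using this
    exact squeeze_zero (fun n => mul_nonneg (wt_pos a k n).le (norm_nonneg _)) hgle htend
  · -- continuity
    intro k
    refine ⟨k, max C 1, lt_of_lt_of_le one_pos (le_max_right C 1), ?_⟩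
    intro y hy
    have hB0 : 0 ≤ pk a k y := pk_nonneg a k y
    have hyB := pk_bound a k y (hy k)
    have hest' := hest k (pk a k y) y hB0 hyB
    apply ciSup_le
    intro n
    calc wt a k n * ‖Tres lam y n‖
        ≤ wt a k n * (C * pk a k y * Real.exp (a n / ((k : ℝ) + 1))) :=
          mul_le_mul_of_nonneg_left (hest' n) (wt_pos a k n).le
      _ = C * pk a k y := by
          rw [show wt a k n * (C * pk a k y * Real.exp (a n / ((k : ℝ) + 1)))
              = C * pk a k y * (wt a k n * Real.exp (a n / ((k : ℝ) + 1))) from by ring,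
            wt_mul_exp, mul_one]
      _ ≤ max C 1 * pk a k y := mul_le_mul_of_nonneg_right (le_max_left C 1) hB0
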